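/- If A and B are finite groups, then the second nilpotent product A *₂ B is finite of order |A|·|B|·|A^{ab} ⊗ B^{ab}|. -/

import Mathlib

open Monoid
open scoped commutatorElement

/-- The normal subgroup of the free product `A ∗ B` generated by commutators
`⁅x, ⁅a, b⁆⁆` with `x ∈ A ∗ B`, `a ∈ A`, `b ∈ B`. -/
def nil2Rel (A B : Type*) [Group A] [Group B] : Subgroup (Coprod A B) :=
  Subgroup.normalClosure
    {z | ∃ (x : Coprod A B) (a : A) (b : B), z = ⁅x, ⁅(Coprod.inl a : Coprod A B), Coprod.inr b⁆⁆}

instance (A B : Type*) [Group A] [Group B] : (nil2Rel A B).Normal :=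
  Subgroup.normalClosure_normal

/-- The second nilpotent product `A *₂ B = (A ∗ B)/[A ∗ B, [A,B]]`. -/
def Nil2 (A B : Type*) [Group A] [Group B] : Type _ :=
  Coprod A B ⧸ nil2Rel A B

instance (A B : Type*) [Group A] [Group B] : Group (Nil2 A B) :=
  QuotientGroup.Quotient.group _

/-- Canonical map `A → A *₂ B`. -/
def Nil2.inl {A B : Type*} [Group A] [Group B] : A →* Nil2 A B :=
  (QuotientGroup.mk' (nil2Rel A B)).comp Coprod.inl

/-- Canonical map `B → A *₂ B`. -/
def Nil2.inr {A B : Type*} [Group A] [Group B] : B →* Nil2 A B :=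
  (QuotientGroup.mk' (nil2Rel A B)).comp Coprod.inr

/-- The subgroup `[A,B]⁽²⁾` of `A *₂ B` generated by the commutators `⁅a, b⁆`. -/
def commSubgroup (A B : Type*) [Group A] [Group B] : Subgroup (Nil2 A B) :=
  Subgroup.closure {z | ∃ (a : A) (b : B), z = ⁅(Nil2.inl a : Nil2 A B), Nil2.inr b⁆}

noncomputable section Model

variable {A B : Type*} [Group A] [Group B]

abbrev TAB (A B : Type*) [Group A] [Group B] :=
  TensorProduct ℤ (Additive (Abelianization A)) (Additive (Abelianization B))

def abA (a : A) : Additive (Abelianization A) := Additive.ofMul (Abelianization.of a)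
def abB (b : B) : Additive (Abelianization B) := Additive.ofMul (Abelianization.of b)

@[simp] lemma abA_mul (a a' : A) : abA (a * a') = abA a + abA a' := by
  simp [abA, ofMul_mul]
@[simp] lemma abA_one : abA (1 : A) = 0 := by simp [abA]
@[simp] lemma abA_inv (a : A) : abA a⁻¹ = - abA a := by simp [abA]
@[simp] lemma abB_mul (b b' : B) : abB (b * b') = abB b + abB b' := by
  simp [abB, ofMul_mul]
@[simp] lemma abB_one : abB (1 : B) = 0 := by simp [abB]
@[simp] lemma abB_inv (b : B) : abB b⁻¹ = - abB b := by simp [abB]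

@[ext] structure Model (A B : Type*) [Group A] [Group B] where
  a : A
  b : B
  t : TAB A B

instance : Group (Model A B) where
  mul x y := ⟨x.a * y.a, x.b * y.b, x.t + y.t - (abA y.a) ⊗ₜ (abB x.b)⟩
  one := ⟨1, 1, 0⟩
  inv x := ⟨x.a⁻¹, x.b⁻¹, -x.t - (abA x.a) ⊗ₜ (abB x.b)⟩
  mul_assoc x y z := by
    refine Model.ext (mul_assoc _ _ _) (mul_assoc _ _ _) ?_
    show (x.t + y.t - abA y.a ⊗ₜ abB x.b) + z.t - abA z.a ⊗ₜ abB (x.b * y.b)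
      = x.t + (y.t + z.t - abA z.a ⊗ₜ abB y.b) - abA (y.a * z.a) ⊗ₜ abB x.b
    rw [abB_mul, abA_mul, TensorProduct.tmul_add, TensorProduct.add_tmul]
    abel
  one_mul x := by
    refine Model.ext (one_mul _) (one_mul _) ?_
    show 0 + x.t - abA x.a ⊗ₜ abB (1 : B) = x.t
    simp
  mul_one x := by
    refine Model.ext (mul_one _) (mul_one _) ?_
    show x.t + 0 - abA (1 : A) ⊗ₜ abB x.b = x.t
    simp
  inv_mul_cancel x := by
    refine Model.ext (inv_mul_cancel _) (inv_mul_cancel _) ?_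
    show (-x.t - abA x.a ⊗ₜ abB x.b) + x.t - abA x.a ⊗ₜ abB x.b⁻¹ = 0
    rw [abB_inv, TensorProduct.tmul_neg]
    abel

lemma Model.mul_def (x y : Model A B) :
    x * y = ⟨x.a * y.a, x.b * y.b, x.t + y.t - (abA y.a) ⊗ₜ (abB x.b)⟩ := rfl

lemma Model.one_def : (1 : Model A B) = ⟨1, 1, 0⟩ := rfl

lemma Model.inv_def (x : Model A B) :
    x⁻¹ = ⟨x.a⁻¹, x.b⁻¹, -x.t - (abA x.a) ⊗ₜ (abB x.b)⟩ := rfl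

def iotaA : A →* Model A B where
  toFun a := ⟨a, 1, 0⟩
  map_one' := rfl
  map_mul' a a' := by simp [Model.mul_def]

def iotaB : B →* Model A B where
  toFun b := ⟨1, b, 0⟩
  map_one' := rfl
  map_mul' b b' := by simp [Model.mul_def]

lemma Model.central (s : TAB A B) (x : Model A B) :
    (⟨1, 1, s⟩ : Model A B) * x = x * ⟨1, 1, s⟩ := by
  simp [Model.mul_def, add_comm]

lemma comm_iota (a : A) (b : B) :
    ⁅(iotaA a : Model A B), iotaB b⁆ = ⟨1, 1, abA a ⊗ₜ abB b⟩ := by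
  simp [commutatorElement_def, iotaA, iotaB, Model.mul_def, Model.inv_def,
    TensorProduct.neg_tmul, TensorProduct.tmul_neg]

end Model

noncomputable section Nil2Part

variable {A B : Type*} [Group A] [Group B]

/-- The homomorphism from the free product to the model. -/
def phi : Coprod A B →* Model A B := Coprod.lift iotaA iotaB

lemma nil2Rel_le_ker : nil2Rel A B ≤ (phi (A := A) (B := B)).ker := by
  apply Subgroup.normalClosure_le_normal
  rintro z ⟨x, a, b, rfl⟩
  have : phi ⁅(Coprod.inl a : Coprod A B), Coprod.inr b⁆
      = (⟨1, 1, abA a ⊗ₜ abB b⟩ : Model A B) := by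
    rw [map_commutatorElement]
    simp only [phi, Coprod.lift_apply_inl, Coprod.lift_apply_inr]
    exact comm_iota a b
  have hmem : phi ⁅x, ⁅(Coprod.inl a : Coprod A B), Coprod.inr b⁆⁆ = (1 : Model A B) := by
    rw [map_commutatorElement, this]
    exact commutatorElement_eq_one_iff_commute.mpr
      ((Model.central (abA a ⊗ₜ abB b) (phi x)).symm)
  exact hmem

/-- The induced homomorphism `Nil2 A B →* Model A B`. -/
def psi : Nil2 A B →* Model A B :=
  QuotientGroup.lift (nil2Rel A B) phi nil2Rel_le_ker

lemma psi_mk (g : Coprod A B) : psi (QuotientGroup.mk g : Nil2 A B) = phi g := rfl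

@[simp] lemma psi_inl (a : A) : psi (Nil2.inl a : Nil2 A B) = iotaA a := rfl
@[simp] lemma psi_inr (b : B) : psi (Nil2.inr b : Nil2 A B) = iotaB b := rfl

/-- The commutators `⁅inl a, inr b⁆` are central in `Nil2 A B`. -/
lemma central_k (a : A) (b : B) (x : Nil2 A B) :
    Commute x ⁅(Nil2.inl a : Nil2 A B), Nil2.inr b⁆ := by
  induction x using QuotientGroup.induction_on with
  | H g =>
    have h1 : (⁅(Nil2.inl a : Nil2 A B), Nil2.inr b⁆ : Nil2 A B)
        = QuotientGroup.mk ⁅(Coprod.inl a : Coprod A B), Coprod.inr b⁆ := by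
      rfl
    refine commutatorElement_eq_one_iff_commute.mp ?_; rw [h1]
    show (QuotientGroup.mk ⁅g, ⁅(Coprod.inl a : Coprod A B), Coprod.inr b⁆⁆ : Nil2 A B) = 1
    rw [QuotientGroup.eq_one_iff]
    exact Subgroup.subset_normalClosure ⟨g, a, b, rfl⟩

lemma k_mem_center (a : A) (b : B) :
    ⁅(Nil2.inl a : Nil2 A B), Nil2.inr b⁆ ∈ Subgroup.center (Nil2 A B) :=
  Subgroup.mem_center_iff.mpr fun g => (central_k a b g).eq

end Nil2Part

noncomputable section Theta

open scoped IsMulCommutative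

variable {A B : Type*} [Group A] [Group B]

/-- `K a b` is the central commutator `⁅inl a, inr b⁆` as an element of the center. -/
def K (a : A) (b : B) : Subgroup.center (Nil2 A B) :=
  ⟨⁅(Nil2.inl a : Nil2 A B), Nil2.inr b⁆, k_mem_center a b⟩

lemma comm_mul_left {G : Type*} [Group G] (x y z : G) (h : ∀ w, Commute w ⁅y, z⁆) :
    ⁅x * y, z⁆ = ⁅x, z⁆ * ⁅y, z⁆ := by
  have e1 : ⁅x * y, z⁆ = x * ⁅y, z⁆ * x⁻¹ * ⁅x, z⁆ := by group
  rw [e1, (h x).eq, mul_inv_cancel_right]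
  exact ((h ⁅x, z⁆).eq).symm

lemma comm_mul_right {G : Type*} [Group G] (x y z : G) (h : ∀ w, Commute w ⁅x, z⁆) :
    ⁅x, y * z⁆ = ⁅x, y⁆ * ⁅x, z⁆ := by
  have e1 : ⁅x, y * z⁆ = ⁅x, y⁆ * (y * ⁅x, z⁆ * y⁻¹) := by group
  rw [e1, (h y).eq, mul_inv_cancel_right]

/-- `K a ·` as a monoid hom `B →* center (Nil2 A B)`. -/
def Kb (a : A) : B →* Subgroup.center (Nil2 A B) where
  toFun b := K a b
  map_one' := by
    ext
    show ⁅(Nil2.inl a : Nil2 A B), Nil2.inr (1 : B)⁆ = 1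
    rw [map_one, commutatorElement_one_right]
  map_mul' b b' := by
    ext
    show ⁅(Nil2.inl a : Nil2 A B), Nil2.inr (b * b')⁆
      = ⁅(Nil2.inl a : Nil2 A B), Nil2.inr b⁆ * ⁅(Nil2.inl a : Nil2 A B), Nil2.inr b'⁆
    rw [map_mul]
    exact comm_mul_right _ _ _ (central_k a b')

/-- `K` as a monoid hom `A →* (B →* center (Nil2 A B))`. -/
def KA : A →* (B →* Subgroup.center (Nil2 A B)) where
  toFun := Kb
  map_one' := by
    ext b
    show ⁅(Nil2.inl (1 : A) : Nil2 A B), Nil2.inr b⁆ = 1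
    rw [map_one, commutatorElement_one_left]
  map_mul' a a' := by
    ext b
    show ⁅(Nil2.inl (a * a') : Nil2 A B), Nil2.inr b⁆
      = ⁅(Nil2.inl a : Nil2 A B), Nil2.inr b⁆ * ⁅(Nil2.inl a' : Nil2 A B), Nil2.inr b⁆
    rw [map_mul]
    exact comm_mul_left _ _ _ (central_k a' b)

/-- Lift through both abelianizations. -/
def L2 : Abelianization A →* (Abelianization B →* Subgroup.center (Nil2 A B)) where
  toFun x := Abelianization.lift ((Abelianization.lift (KA (A := A) (B := B))) x)
  map_one' := by
    show Abelianization.lift ((Abelianization.lift (KA (A := A) (B := B))) 1) = 1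
    rw [map_one]
    refine Abelianization.hom_ext _ _ ?_
    ext b
    simp
  map_mul' x y := by
    show Abelianization.lift ((Abelianization.lift (KA (A := A) (B := B))) (x * y)) = _
    rw [map_mul]
    refine Abelianization.hom_ext _ _ ?_
    ext b
    simp

@[simp] lemma L2_of (a : A) (b : B) :
    L2 (Abelianization.of a) (Abelianization.of b) = K a b := by
  simp [L2, Abelianization.lift_apply_of, KA, Kb]

/-- Biadditive version of `L2`. -/
def bil : Additive (Abelianization A) →+
    (Additive (Abelianization B) →+ Additive (Subgroup.center (Nil2 A B))) where
  toFun x :=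
    { toFun := fun y => Additive.ofMul (L2 x.toMul y.toMul)
      map_zero' := by simp
      map_add' := fun y y' => by simp [toMul_add, ← ofMul_mul] }
  map_zero' := by ext y; simp
  map_add' x x' := by ext y; simp [toMul_add, ← ofMul_mul]

/-- The ℤ-linear map out of the tensor product induced by the commutator pairing. -/
def theta : TAB A B →ₗ[ℤ] Additive (Subgroup.center (Nil2 A B)) :=
  TensorProduct.lift
    (((addMonoidHomLequivInt ℤ).toLinearMap.toAddMonoidHom.comp bil).toIntLinearMap)

lemma theta_tmul (x : Additive (Abelianization A)) (y : Additive (Abelianization B)) :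
    theta (A := A) (B := B) (x ⊗ₜ y) = bil x y := rfl

end Theta

noncomputable section CC

open scoped IsMulCommutative

variable {A B : Type*} [Group A] [Group B]

/-- The central element of `Nil2 A B` corresponding to `t` in the tensor product. -/
def cc (t : TAB A B) : Nil2 A B := ((theta t).toMul : Subgroup.center (Nil2 A B))

lemma cc_central (t : TAB A B) (x : Nil2 A B) : cc t * x = x * cc t :=
  ((Subgroup.mem_center_iff.mp (theta (A := A) (B := B) t).toMul.2) x).symm

@[simp] lemma cc_zero : cc (0 : TAB A B) = 1 := by
  simp [cc, map_zero]

lemma cc_add (s t : TAB A B) : cc (s + t) = cc s * cc t := by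
  simp only [cc, map_add]
  rfl

lemma cc_neg (t : TAB A B) : cc (-t) = (cc t)⁻¹ := by
  simp only [cc, map_neg]
  rfl

lemma cc_tmul (a : A) (b : B) :
    cc (abA a ⊗ₜ abB b) = ⁅(Nil2.inl a : Nil2 A B), Nil2.inr b⁆ := by
  show (((theta (abA a ⊗ₜ abB b)).toMul : Subgroup.center (Nil2 A B)) : Nil2 A B) = _
  rw [theta_tmul]
  show ((L2 (Abelianization.of a) (Abelianization.of b) : Subgroup.center (Nil2 A B)) : Nil2 A B) = _
  rw [L2_of]
  rfl

lemma cc_central_inv (t : TAB A B) (x : Nil2 A B) : (cc t)⁻¹ * x = x * (cc t)⁻¹ := by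
  rw [← cc_neg, cc_central]

/-- The normal-form function from the model to `Nil2`. -/
def Fn (m : Model A B) : Nil2 A B := Nil2.inl m.a * Nil2.inr m.b * cc m.t

lemma swap_inr_inl (a' : A) (b : B) :
    (Nil2.inr b : Nil2 A B) * Nil2.inl a'
      = Nil2.inl a' * Nil2.inr b * (cc (abA a' ⊗ₜ abB b))⁻¹ := by
  rw [cc_tmul]
  have h1 : (Nil2.inr b : Nil2 A B) * Nil2.inl a'
      = ⁅(Nil2.inl a' : Nil2 A B), Nil2.inr b⁆⁻¹ * (Nil2.inl a' * Nil2.inr b) := by group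
  rw [h1, ← ((central_k a' b (Nil2.inl a' * Nil2.inr b)).inv_right).eq, mul_assoc]

lemma Fn_mul (m m' : Model A B) : Fn m * Fn m' = Fn (m * m') := by
  obtain ⟨a, b, t⟩ := m
  obtain ⟨a', b', t'⟩ := m'
  show (Nil2.inl a * Nil2.inr b * cc t) * (Nil2.inl a' * Nil2.inr b' * cc t')
    = Nil2.inl (a * a') * Nil2.inr (b * b') * cc (t + t' - abA a' ⊗ₜ abB b)
  simp only [map_mul, mul_assoc]
  rw [cc_central t (Nil2.inl a' * (Nil2.inr b' * cc t'))]
  simp only [mul_assoc]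
  rw [← mul_assoc (Nil2.inr b : Nil2 A B) (Nil2.inl a'), swap_inr_inl]
  simp only [mul_assoc]
  rw [cc_central_inv (abA a' ⊗ₜ abB b) (Nil2.inr b' * (cc t' * cc t))]
  simp only [mul_assoc]
  congr 2
  rw [← cc_neg, ← cc_add, ← cc_add]
  congr 1
  abel_nf

end CC

noncomputable section Final

variable {A B : Type*} [Group A] [Group B]

lemma abA_surj (x : Additive (Abelianization A)) : ∃ a : A, abA a = x := by
  obtain ⟨a, ha⟩ := QuotientGroup.mk_surjective (Additive.toMul x : Abelianization A)
  exact ⟨a, by rw [abA, show Abelianization.of a = QuotientGroup.mk a from rfl, ha]; simp⟩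

lemma abB_surj (y : Additive (Abelianization B)) : ∃ b : B, abB b = y := by
  obtain ⟨b, hb⟩ := QuotientGroup.mk_surjective (Additive.toMul y : Abelianization B)
  exact ⟨b, by rw [abB, show Abelianization.of b = QuotientGroup.mk b from rfl, hb]; simp⟩

lemma psi_cc (t : TAB A B) : psi (cc t : Nil2 A B) = (⟨1, 1, t⟩ : Model A B) := by
  induction t using TensorProduct.induction_on with
  | zero => simp [Model.one_def]
  | tmul x y =>
    obtain ⟨a, rfl⟩ := abA_surj x
    obtain ⟨b, rfl⟩ := abB_surj y
    rw [cc_tmul, map_commutatorElement, psi_inl, psi_inr, comm_iota]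
  | add s t hs ht =>
    rw [cc_add, map_mul, hs, ht]
    simp [Model.mul_def]

lemma psi_Fn (m : Model A B) : psi (Fn m) = m := by
  obtain ⟨a, b, t⟩ := m
  show psi (Nil2.inl a * Nil2.inr b * cc t) = _
  rw [map_mul, map_mul, psi_inl, psi_inr, psi_cc]
  simp [iotaA, iotaB, Model.mul_def]

lemma Fn_surj (z : Nil2 A B) : ∃ m : Model A B, Fn m = z := by
  induction z using QuotientGroup.induction_on with
  | H g =>
    induction g using Coprod.induction_on with
    | inl a =>
      refine ⟨⟨a, 1, 0⟩, ?_⟩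
      show Nil2.inl a * Nil2.inr (1 : B) * cc 0 = _
      simp only [map_one, cc_zero, mul_one]
      rfl
    | inr b =>
      refine ⟨⟨1, b, 0⟩, ?_⟩
      show Nil2.inl (1 : A) * Nil2.inr b * cc 0 = _
      simp only [map_one, cc_zero, mul_one, one_mul]
      rfl
    | mul x y hx hy =>
      obtain ⟨m, hm⟩ := hx
      obtain ⟨m', hm'⟩ := hy
      refine ⟨m * m', ?_⟩
      rw [← Fn_mul, hm, hm']
      rfl

lemma psi_bijective : Function.Bijective (psi : Nil2 A B → Model A B) := by
  constructor
  · intro z1 z2 h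
    obtain ⟨m1, rfl⟩ := Fn_surj z1
    obtain ⟨m2, rfl⟩ := Fn_surj z2
    rw [psi_Fn, psi_Fn] at h
    rw [h]
  · intro m
    exact ⟨Fn m, psi_Fn m⟩

/-- The model is just a product as a type. -/
def modelEquivProd : Model A B ≃ A × B × TAB A B where
  toFun m := (m.a, m.b, m.t)
  invFun p := ⟨p.1, p.2.1, p.2.2⟩
  left_inv m := rfl
  right_inv p := rfl

lemma tab_torsion [Finite A] : Module.IsTorsion ℤ (TAB A B) := by
  intro t
  have hpos : (0 : ℕ) < Nat.card (Additive (Abelianization A)) := Nat.card_pos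
  refine ⟨⟨(Nat.card (Additive (Abelianization A)) : ℤ),
    mem_nonZeroDivisors_of_ne_zero (by exact_mod_cast hpos.ne')⟩, ?_⟩
  show (Nat.card (Additive (Abelianization A)) : ℤ) • t = 0
  induction t using TensorProduct.induction_on with
  | zero => simp
  | tmul x y =>
    rw [TensorProduct.smul_tmul', natCast_zsmul, card_nsmul_eq_zero',
      TensorProduct.zero_tmul]
  | add s t hs ht => rw [smul_add, hs, ht, add_zero]

lemma tab_finite [Finite A] [Finite B] : Finite (TAB A B) :=
  haveI : Module.Finite ℤ (TAB A B) := Module.Finite.tensorProduct ℤ _ _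
  Module.finite_of_fg_torsion _ tab_torsion

end Final

/-- For finite groups `A`, `B`, the group `A *₂ B` is finite of order
`|A|·|B|·|Aᵃᵇ ⊗ Bᵃᵇ|`. -/
theorem stmt10 (A B : Type*) [Group A] [Group B] [Finite A] [Finite B] :
    Finite (Nil2 A B) ∧
      Nat.card (Nil2 A B) = Nat.card A * Nat.card B *
        Nat.card (TensorProduct ℤ (Additive (Abelianization A))
          (Additive (Abelianization B))) := by
  haveI : Finite (TAB A B) := tab_finite
  have e : Nil2 A B ≃ A × B × TAB A B :=
    (Equiv.ofBijective psi psi_bijective).trans modelEquivProd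
  constructor
  · exact Finite.of_equiv _ e.symm
  · rw [Nat.card_congr e, Nat.card_prod, Nat.card_prod, mul_assoc]
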